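/- For every base b ≥ 2 and every K ≥ 1, there exists N ≥ 2 such that k · b^N + 1 is composite for all 1 ≤ k ≤ K. -/

import Mathlib

/-- For every base `b ≥ 2` and every `K ≥ 1`, there exists `N ≥ 2` such that
`k * b^N + 1` is composite for all `1 ≤ k ≤ K`. -/
theorem exists_N_all_composite (b K : ℕ) (hb : 2 ≤ b) (hK : 1 ≤ K) :
    ∃ N : ℕ, 2 ≤ N ∧ ∀ k : ℕ, 1 ≤ k → k ≤ K →
      1 < k * b ^ N + 1 ∧ ¬ Nat.Prime (k * b ^ N + 1) := by
  set M := b * K with hM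
  have hMfac := Nat.factorial_pos M
  refine ⟨M.factorial + 1, by omega, ?_⟩
  intro k hk1 hkK
  set N := M.factorial + 1 with hN
  have h3 : 3 ≤ k * b + 1 := by nlinarith
  set p := (k * b + 1).minFac with hp
  have hpp : p.Prime := Nat.minFac_prime (by omega)
  have hpd : p ∣ k * b + 1 := Nat.minFac_dvd _
  have hple : p ≤ k * b + 1 := Nat.minFac_le (by omega)
  have hpb : ¬ p ∣ b := by
    intro h
    have h1 : p ∣ k * b := h.mul_left k
    have : p ∣ (k * b + 1) - (k * b) := Nat.dvd_sub hpd h1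
    simp at this
    exact hpp.one_lt.ne' this
  haveI : Fact p.Prime := ⟨hpp⟩
  have hb0 : (b : ZMod p) ≠ 0 := by
    rw [Ne, ZMod.natCast_eq_zero_iff]
    exact hpb
  have hfermat : (b : ZMod p) ^ (p - 1) = 1 := ZMod.pow_card_sub_one_eq_one hb0
  have hdfac : (p - 1) ∣ M.factorial := by
    apply Nat.dvd_factorial
    · have := hpp.two_le; omega
    · have h1 : k * b ≤ K * b := Nat.mul_le_mul_right b hkK
      have h2 : K * b = b * K := mul_comm _ _
      omega
  obtain ⟨c, hc⟩ := hdfac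
  have hbTot : (b : ZMod p) ^ M.factorial = 1 := by
    rw [hc, pow_mul, hfermat, one_pow]
  have h0 : ((k * b + 1 : ℕ) : ZMod p) = 0 := by
    rw [ZMod.natCast_eq_zero_iff]; exact hpd
  have key : p ∣ k * b ^ N + 1 := by
    rw [← ZMod.natCast_eq_zero_iff]
    push_cast
    rw [hN, pow_succ, ← mul_assoc]
    push_cast at h0
    calc (k : ZMod p) * (b : ZMod p) ^ M.factorial * b + 1
        = (k * b) * ((b : ZMod p) ^ M.factorial) + 1 := by ring
      _ = (k * b) + 1 := by rw [hbTot]; ring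
      _ = 0 := h0
  have hbig : k * b + 1 < k * b ^ N + 1 := by
    have hb1 : b ^ 1 < b ^ N := Nat.pow_lt_pow_right (by omega) (by omega)
    have : k * b ^ 1 < k * b ^ N := by nlinarith
    simpa using this
  have hpos : 0 < k * b ^ N := Nat.mul_pos (by omega) (Nat.pow_pos (by omega))
  refine ⟨by omega, ?_⟩
  intro hpr
  rcases (hpr.eq_one_or_self_of_dvd p key) with h | h
  · exact hpp.one_lt.ne' h
  · omega
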